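/- arXiv:2405.05834 — 2 statements merged into one kernel-verified Lean document; each statement's English description precedes it below -/
import Mathlib

section
/- (Gauss–Lucas) Let P be a nonconstant polynomial with complex coefficients. Then every root of the derivative P' lies in the convex hull of the set of roots of P. -/
open Polynomial Complex

/-- **Gauss–Lucas theorem**: every root of the derivative of a nonconstant complex polynomial
lies in the convex hull (over `ℝ`) of the set of roots of the polynomial. -/
theorem gauss_lucas (P : Polynomial ℂ) (hP : 0 < P.degree) :
    ∀ z : ℂ, P.derivative.eval z = 0 → z ∈ convexHull ℝ {w : ℂ | P.eval w = 0} := by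
  classical
  intro z hz
  by_cases hPz : P.eval z = 0
  · exact subset_convexHull ℝ _ hPz
  have hP0 : P ≠ 0 := fun h => by simp [h] at hP
  set t := P.roots with ht
  have hlc : P.leadingCoeff ≠ 0 := Polynomial.leadingCoeff_ne_zero.2 hP0
  have hsplit : P = Polynomial.C P.leadingCoeff * (t.map fun a => X - Polynomial.C a).prod :=
    Polynomial.Splits.eq_prod_roots (IsAlgClosed.splits P)
  -- nonemptiness of roots
  have hcard : t.card = P.natDegree :=
    (Polynomial.splits_iff_card_roots.mp (IsAlgClosed.splits P))
  have htne : t ≠ 0 := by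
    intro h
    have := natDegree_pos_iff_degree_pos.mpr hP
    rw [← hcard, h] at this
    simp at this
  -- evaluation of the product
  have hevalprod : ∀ s : Multiset ℂ, Polynomial.eval z ((s.map fun a => X - Polynomial.C a).prod)
      = (s.map fun a => z - a).prod := by
    intro s
    rw [Polynomial.eval_multiset_prod, Multiset.map_map]
    simp
  have hQz : (t.map fun a => z - a).prod ≠ 0 := by
    intro h
    apply hPz
    rw [hsplit]
    simp [hevalprod, h]
  have hne : ∀ r ∈ t, z - r ≠ 0 := by
    intro r hr h
    exact hQz (Multiset.prod_eq_zero (by rw [← h]; exact Multiset.mem_map_of_mem _ hr))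
  -- logarithmic derivative vanishes
  have hsum0 : (t.map fun a => (z - a)⁻¹).sum = 0 := by
    have hderiv : Polynomial.eval z (Polynomial.derivative P)
        = P.leadingCoeff * (t.map fun r => ((t.erase r).map fun a => z - a).prod).sum := by
      conv_lhs => rw [hsplit]
      rw [Polynomial.derivative_mul, Polynomial.derivative_C, zero_mul, zero_add,
        Polynomial.eval_mul, Polynomial.eval_C, Polynomial.derivative_prod]
      congr 1
      simp only [← Polynomial.coe_evalRingHom, map_multiset_sum, Multiset.map_map]
      refine congrArg Multiset.sum (Multiset.map_congr rfl ?_)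
      intro r _
      simp [hevalprod]
    have h2 : (t.map fun r => ((t.erase r).map fun a => z - a).prod).sum
        = (t.map fun a => z - a).prod * (t.map fun a => (z - a)⁻¹).sum := by
      rw [← Multiset.sum_map_mul_left]
      refine congrArg Multiset.sum (Multiset.map_congr rfl ?_)
      intro r hr
      have hp : (z - r) * ((t.erase r).map fun a => z - a).prod = (t.map fun a => z - a).prod :=
        Multiset.prod_map_erase hr
      rw [← hp, mul_comm (z - r), mul_assoc, mul_inv_cancel₀ (hne r hr), mul_one]
    rw [hderiv, h2] at hz
    rcases mul_eq_zero.mp hz with h | h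
    · exact absurd h hlc
    · rcases mul_eq_zero.mp h with h' | h'
      · exact absurd h' hQz
      · exact h'
  -- weights
  set w : ℂ → ℝ := fun r => (t.count r : ℝ) * (Complex.normSq (z - r))⁻¹ with hwdef
  have hw0 : ∀ r ∈ t.toFinset, 0 ≤ w r := fun r _ =>
    mul_nonneg (Nat.cast_nonneg _) (inv_nonneg.2 (Complex.normSq_nonneg _))
  have hwpos : 0 < ∑ r ∈ t.toFinset, w r := by
    obtain ⟨r, hr⟩ := Multiset.exists_mem_of_ne_zero htne
    refine Finset.sum_pos' hw0 ⟨r, Multiset.mem_toFinset.mpr hr, ?_⟩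
    have h1 : 0 < t.count r := Multiset.count_pos.mpr hr
    have h2 : 0 < Complex.normSq (z - r) := Complex.normSq_pos.mpr (hne r hr)
    exact mul_pos (by exact_mod_cast h1) (inv_pos.2 h2)
  -- key identity
  have hkey : ∑ r ∈ t.toFinset, w r • (z - r) = 0 := by
    have h1 : (t.map fun a => (starRingEnd ℂ) ((z - a)⁻¹)).sum = 0 := by
      have := congrArg (starRingEnd ℂ) hsum0
      rwa [map_multiset_sum, Multiset.map_map, map_zero] at this
    rw [Finset.sum_multiset_map_count] at h1
    rw [← h1]
    refine Finset.sum_congr rfl fun r hr => ?_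
    have hzr : z - r ≠ 0 := hne r (Multiset.mem_toFinset.mp hr)
    have hconj : (starRingEnd ℂ) ((z - r)⁻¹)
        = (z - r) * ((Complex.normSq (z - r) : ℝ) : ℂ)⁻¹ := by
      rw [map_inv₀, Complex.inv_def, Complex.normSq_conj]
      simp
    rw [hconj, nsmul_eq_mul, Complex.real_smul, hwdef]
    push_cast
    ring
  -- convex combination
  have hsz : ∑ r ∈ t.toFinset, w r • (id r : ℂ) = (∑ r ∈ t.toFinset, w r) • z := by
    have h2 : ∑ r ∈ t.toFinset, (w r • z - w r • (r : ℂ)) = 0 := by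
      rw [← hkey]; exact Finset.sum_congr rfl fun r _ => (smul_sub _ _ _).symm
    rw [Finset.sum_sub_distrib] at h2
    have := sub_eq_zero.mp h2
    simpa [Finset.sum_smul] using this.symm
  have hcm : t.toFinset.centerMass w id = z := by
    rw [Finset.centerMass, hsz, smul_smul, inv_mul_cancel₀ (ne_of_gt hwpos), one_smul]
  rw [← hcm]
  refine Finset.centerMass_mem_convexHull _ hw0 hwpos fun r hr => ?_
  have hrm := Multiset.mem_toFinset.mp hr
  rw [ht, Polynomial.mem_roots'] at hrm
  exact hrm.2
end

section
/- Let a ≥ 0 and b ∈ ℝ. Then the polynomials Q_k(z) = (1 − az²/k)^k (1 + bz/k)^k have only real roots for every k ≥ 1, and Q_k converges locally uniformly on ℂ to e^{−az² + bz} as k → ∞. -/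
open Complex


lemma pow_diff_bound (x y : ℂ) (M : ℝ) (hM : 1 ≤ M) (hx : ‖x‖ ≤ M) (hy : ‖y‖ ≤ M) :
    ∀ n : ℕ, ‖x ^ n - y ^ n‖ ≤ n * M ^ n * ‖x - y‖ := by
  intro n
  induction n with
  | zero => simp
  | succ n ih =>
    have hM0 : (0:ℝ) ≤ M := le_trans zero_le_one hM
    have key : x ^ (n+1) - y ^ (n+1) = x * (x ^ n - y ^ n) + (x - y) * y ^ n := by ring
    have h2 : (0:ℝ) ≤ ‖x - y‖ := norm_nonneg _
    calc ‖x ^ (n+1) - y ^ (n+1)‖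
        ≤ ‖x * (x ^ n - y ^ n)‖ + ‖(x - y) * y ^ n‖ := by
          rw [key]; exact norm_add_le _ _
      _ = ‖x‖ * ‖x ^ n - y ^ n‖ + ‖x - y‖ * ‖y‖ ^ n := by
          rw [norm_mul, norm_mul, norm_pow]
      _ ≤ M * (n * M ^ n * ‖x - y‖) + ‖x - y‖ * M ^ n :=
          add_le_add (mul_le_mul hx ih (norm_nonneg _) hM0)
            (mul_le_mul_of_nonneg_left (pow_le_pow_left₀ (norm_nonneg _) hy n) h2)
      _ ≤ (n+1 : ℕ) * M ^ (n+1) * ‖x - y‖ := by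
          rw [pow_succ]
          push_cast
          nlinarith [mul_nonneg (mul_nonneg h2 (pow_nonneg hM0 n)) (sub_nonneg.mpr hM),
            pow_nonneg hM0 n, Nat.cast_nonneg (α := ℝ) n]

lemma key_bound (w : ℂ) (R : ℝ) (hw : ‖w‖ ≤ R) (n : ℕ) (hn1 : 1 ≤ n) (hnR : R ≤ n) :
    ‖(1 + w / n) ^ n - Complex.exp w‖ ≤ R ^ 2 * Real.exp R / n := by
  have hn0 : (0:ℝ) < n := by exact_mod_cast hn1
  have hn0' : (n:ℂ) ≠ 0 := Nat.cast_ne_zero.mpr (by omega)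
  have hR0 : 0 ≤ R := le_trans (norm_nonneg w) hw
  have habs : ‖w / n‖ ≤ R / n := by
    rw [norm_div, Complex.norm_natCast]
    gcongr
  have hle1 : ‖w / n‖ ≤ 1 := habs.trans (by rw [div_le_one hn0]; exact hnR)
  set M := Real.exp (R / n) with hMdef
  have hM1 : 1 ≤ M := Real.one_le_exp (div_nonneg hR0 hn0.le)
  have hx : ‖1 + w / n‖ ≤ M := by
    calc ‖1 + w / n‖ ≤ ‖(1:ℂ)‖ + ‖w / n‖ := norm_add_le _ _
      _ = 1 + ‖w / n‖ := by simp
      _ ≤ 1 + R / n := by linarith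
      _ ≤ M := by rw [hMdef]; linarith [Real.add_one_le_exp (R / n)]
  have hy : ‖Complex.exp (w / n)‖ ≤ M := by
    rw [Complex.norm_exp]
    exact Real.exp_le_exp.mpr ((Complex.re_le_norm _).trans habs)
  have hdiff : ‖(1 + w / n) - Complex.exp (w / n)‖ ≤ (R / n) ^ 2 := by
    have h := Complex.norm_exp_sub_one_sub_id_le hle1
    calc ‖(1 + w / n) - Complex.exp (w / n)‖
        = ‖Complex.exp (w / n) - 1 - w / n‖ := by
          rw [show (1 : ℂ) + w / ↑n - Complex.exp (w / ↑n)
            = -(Complex.exp (w / ↑n) - 1 - w / ↑n) by ring, norm_neg]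
      _ ≤ ‖w / n‖ ^ 2 := h
      _ ≤ (R / n) ^ 2 := by gcongr
  have hexp : Complex.exp w = Complex.exp (w / n) ^ n := by
    rw [← Complex.exp_nat_mul]
    congr 1
    field_simp
  calc ‖(1 + w / n) ^ n - Complex.exp w‖
      = ‖(1 + w / n) ^ n - Complex.exp (w / n) ^ n‖ := by rw [hexp]
    _ ≤ n * M ^ n * ‖(1 + w / n) - Complex.exp (w / n)‖ :=
        pow_diff_bound _ _ M hM1 hx hy n
    _ ≤ n * M ^ n * (R / n) ^ 2 := by gcongr
    _ = R ^ 2 * Real.exp R / n := by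
        rw [hMdef, ← Real.exp_nat_mul, mul_div_cancel₀ _ hn0.ne']
        field_simp

/-- For `a ≥ 0` and `b ∈ ℝ`, the polynomials `Q_k(z) = (1 − az²/k)^k (1 + bz/k)^k` have only
real roots for every `k ≥ 1`, and `Q_k → e^{−az² + bz}` locally uniformly on `ℂ`. -/
theorem real_roots_and_tendsto_exp (a b : ℝ) (ha : 0 ≤ a) :
    (∀ k : ℕ, 1 ≤ k → ∀ z : ℂ,
        (1 - (a : ℂ) * z ^ 2 / (k : ℂ)) ^ k * (1 + (b : ℂ) * z / (k : ℂ)) ^ k = 0 → z.im = 0) ∧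
    TendstoLocallyUniformly
      (fun (k : ℕ) (z : ℂ) =>
        (1 - (a : ℂ) * z ^ 2 / (k : ℂ)) ^ k * (1 + (b : ℂ) * z / (k : ℂ)) ^ k)
      (fun z : ℂ => Complex.exp (-(a : ℂ) * z ^ 2 + (b : ℂ) * z)) Filter.atTop := by
  constructor
  · -- real roots
    intro k hk z hz
    have hk0 : (k:ℂ) ≠ 0 := Nat.cast_ne_zero.mpr (by omega)
    have hkR : (0:ℝ) < k := by exact_mod_cast Nat.lt_of_lt_of_le Nat.zero_lt_one hk
    rcases mul_eq_zero.mp hz with h | h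
    · rw [pow_eq_zero_iff (by omega)] at h
      have haz : (a:ℂ) * z ^ 2 = (k:ℂ) := by
        field_simp at h
        linear_combination -h
      have hre := congrArg Complex.re haz
      have him := congrArg Complex.im haz
      simp [pow_two, Complex.mul_re, Complex.mul_im] at hre him
      by_contra hy
      have ha0 : a ≠ 0 := by
        rintro rfl; simp at hre; linarith
      have him' : z.re * z.im + z.im * z.re = 0 := him.resolve_left ha0
      have hx : z.re = 0 := by
        have h2 : z.re * z.im = 0 := by linarith
        exact (mul_eq_zero.mp h2).resolve_right hy
      rw [hx] at hre
      nlinarith [mul_nonneg ha (mul_self_nonneg z.im)]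
    · rw [pow_eq_zero_iff (by omega)] at h
      have hbz : (b:ℂ) * z = -(k:ℂ) := by
        field_simp at h
        linear_combination h
      have him := congrArg Complex.im hbz
      simp [Complex.mul_im] at him
      have hb0 : b ≠ 0 := by
        rintro rfl
        have := congrArg Complex.re hbz
        simp at this
        linarith
      exact him.resolve_left hb0
  · -- locally uniform convergence
    rw [tendstoLocallyUniformly_iff_forall_isCompact]
    intro K hK
    obtain ⟨r, hr⟩ := hK.isBounded.subset_closedBall 0
    have hr0 : 0 ≤ r ∨ K = ∅ := by
      rcases K.eq_empty_or_nonempty with h | ⟨z, hz⟩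
      · exact Or.inr h
      · left
        have := hr hz
        simp [Metric.mem_closedBall] at this
        exact le_trans (norm_nonneg z) this
    rcases hr0 with hr0 | rfl
    swap
    · simp [TendstoUniformlyOn]
    set R : ℝ := max 1 (max (a * r ^ 2) (|b| * r)) with hR
    have hR1 : (1:ℝ) ≤ R := le_max_left _ _
    have hR0 : (0:ℝ) ≤ R := by linarith
    -- bounds for z ∈ K
    have hbound : ∀ z ∈ K, ‖-(a:ℂ) * z ^ 2‖ ≤ R ∧ ‖(b:ℂ) * z‖ ≤ R := by
      intro z hz
      have hzr : ‖z‖ ≤ r := by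
        have := hr hz; simpa [Metric.mem_closedBall, Complex.dist_eq] using this
      constructor
      · calc ‖-(a:ℂ) * z ^ 2‖ = a * ‖z‖ ^ 2 := by
              rw [norm_mul, norm_pow, norm_neg, Complex.norm_real, Real.norm_eq_abs, _root_.abs_of_nonneg ha]
        _ ≤ a * r ^ 2 :=
            mul_le_mul_of_nonneg_left (pow_le_pow_left₀ (norm_nonneg z) hzr 2) ha
        _ ≤ R := le_trans (le_max_left _ _) (le_max_right _ _)
      · calc ‖(b:ℂ) * z‖ = |b| * ‖z‖ := by
              rw [norm_mul, Complex.norm_real, Real.norm_eq_abs]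
        _ ≤ |b| * r := mul_le_mul_of_nonneg_left hzr (abs_nonneg b)
        _ ≤ R := le_trans (le_max_right _ _) (le_max_right _ _)
    rw [Metric.tendstoUniformlyOn_iff]
    intro ε hε
    have htend : Filter.Tendsto (fun k : ℕ => 2 * R ^ 2 * Real.exp (2 * R) / k)
        Filter.atTop (nhds 0) := tendsto_const_div_atTop_nhds_zero_nat _
    filter_upwards [htend.eventually_lt_const hε, Filter.eventually_ge_atTop 1,
      Filter.eventually_ge_atTop ⌈R⌉₊] with k hlt hk1 hkR
    intro z hz
    have hRk : R ≤ (k:ℝ) := le_trans (Nat.le_ceil R) (by exact_mod_cast hkR)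
    obtain ⟨hb1, hb2⟩ := hbound z hz
    set w₁ : ℂ := -(a:ℂ) * z ^ 2
    set w₂ : ℂ := (b:ℂ) * z
    have hrw : (1 : ℂ) - (a:ℂ) * z ^ 2 / (k:ℂ) = 1 + w₁ / (k:ℂ) := by
      simp only [w₁]; ring
    have hkey1 := key_bound w₁ R hb1 k hk1 hRk
    have hkey2 := key_bound w₂ R hb2 k hk1 hRk
    have hkC : (0:ℝ) < (k:ℝ) := by exact_mod_cast hk1
    -- bound |(1+w₁/k)^k| ≤ exp R
    have hf : ‖(1 + w₁ / (k:ℂ)) ^ k‖ ≤ Real.exp R := by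
      rw [norm_pow]
      have habs1 : ‖1 + w₁ / (k:ℂ)‖ ≤ 1 + R / k := by
        calc ‖1 + w₁ / (k:ℂ)‖ ≤ 1 + ‖w₁ / (k:ℂ)‖ := by
              simpa using norm_add_le 1 (w₁ / (k:ℂ))
          _ ≤ 1 + R / k := by
              rw [norm_div, Complex.norm_natCast]; gcongr
      calc ‖1 + w₁ / (k:ℂ)‖ ^ k ≤ (1 + R / k) ^ k :=
            pow_le_pow_left₀ (norm_nonneg _) habs1 k
        _ ≤ Real.exp (R / k) ^ k :=
            pow_le_pow_left₀ (by positivity) (by linarith [Real.add_one_le_exp (R / k)]) k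
        _ = Real.exp R := by
            rw [← Real.exp_nat_mul, mul_div_cancel₀ _ hkC.ne']
    have hG : ‖Complex.exp w₂‖ ≤ Real.exp R := by
      rw [Complex.norm_exp]
      exact Real.exp_le_exp.mpr ((Complex.re_le_norm _).trans hb2)
    have hsplit : Complex.exp (-(a:ℂ) * z ^ 2 + (b:ℂ) * z) = Complex.exp w₁ * Complex.exp w₂ := by
      rw [← Complex.exp_add]
    rw [Complex.dist_eq, hsplit, hrw]
    have hdecomp : Complex.exp w₁ * Complex.exp w₂
          - (1 + w₁ / (k:ℂ)) ^ k * (1 + w₂ / (k:ℂ)) ^ k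
        = (1 + w₁ / (k:ℂ)) ^ k * (Complex.exp w₂ - (1 + w₂ / (k:ℂ)) ^ k)
          + (Complex.exp w₁ - (1 + w₁ / (k:ℂ)) ^ k) * Complex.exp w₂ := by ring
    calc ‖Complex.exp w₁ * Complex.exp w₂
          - (1 + w₁ / (k:ℂ)) ^ k * (1 + w₂ / (k:ℂ)) ^ k‖
        ≤ ‖(1 + w₁ / (k:ℂ)) ^ k‖ * ‖Complex.exp w₂ - (1 + w₂ / (k:ℂ)) ^ k‖
          + ‖Complex.exp w₁ - (1 + w₁ / (k:ℂ)) ^ k‖ * ‖Complex.exp w₂‖ := by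
          rw [hdecomp]
          refine le_trans (norm_add_le _ _) ?_
          rw [norm_mul, norm_mul]
      _ ≤ Real.exp R * (R ^ 2 * Real.exp R / k) + (R ^ 2 * Real.exp R / k) * Real.exp R := by
          have e1 : ‖Complex.exp w₂ - (1 + w₂ / (k:ℂ)) ^ k‖
              ≤ R ^ 2 * Real.exp R / k := by
            rw [← norm_neg]
            simpa [neg_sub] using hkey2
          have e2 : ‖Complex.exp w₁ - (1 + w₁ / (k:ℂ)) ^ k‖
              ≤ R ^ 2 * Real.exp R / k := by
            rw [← norm_neg]
            simpa [neg_sub] using hkey1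
          exact add_le_add (mul_le_mul hf e1 (norm_nonneg _) (Real.exp_pos R).le)
            (mul_le_mul e2 hG (norm_nonneg _) (by positivity))
      _ = 2 * R ^ 2 * Real.exp (2 * R) / k := by
          rw [two_mul R, Real.exp_add]
          field_simp
          ring
      _ < ε := hlt
end
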